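/- Let w be a weight function on V and α ≥ 0. The map φ̃ is a chain map between the augmented ℤ/2 chain complexes of R_α(Ĝ^w) and R_α(G^w)[-1], and φ̃ ∘ φ = Id on the augmented chain complex R_α(G^w)[-1]. -/

import Mathlib

open scoped ENNReal
noncomputable section
attribute [local instance] Classical.propDecidable

namespace RTD

/-- The linear map between ℤ/2-spaces of chains given by an explicit coefficient matrix. -/
def lmap {ι κ : Type*} [Fintype ι] (M : ι → κ → ZMod 2) :
    (ι → ZMod 2) →ₗ[ZMod 2] (κ → ZMod 2) where
  toFun f k := ∑ i, M i k * f i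
  map_add' f g := by
    funext k
    simp [mul_add, Finset.sum_add_distrib]
  map_smul' c f := by
    funext k
    simp only [Pi.smul_apply, smul_eq_mul, RingHom.id_apply, Finset.mul_sum]
    exact Finset.sum_congr rfl fun i _ => by ring

variable {U : Type*}

/-- Simplexes of the Vietoris–Rips complex at threshold `α` having `n` vertices.
For `n = 0` this is the empty set, serving as the augmentation generator, so that
position `n` of the augmented chain complex corresponds to homological degree `n - 1`. -/
abbrev Simp [Fintype U] (d : U → U → ℝ≥0∞) (α : ℝ) (n : ℕ) :=
  {σ : Finset U // σ.card = n ∧ ∀ x ∈ σ, ∀ y ∈ σ, x ≠ y → d x y ≤ ENNReal.ofReal α}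

/-- Position-`n` chains (over ℤ/2) of the augmented chain complex of the Vietoris–Rips complex. -/
abbrev Ch [Fintype U] (d : U → U → ℝ≥0∞) (α : ℝ) (n : ℕ) := Simp d α n → ZMod 2

/-- The boundary operator of the augmented chain complex (over ℤ/2 all signs are 1);
the coefficient of `τ` in `∂ σ` is 1 exactly when `τ ⊂ σ`. -/
def bdry [Fintype U] (d : U → U → ℝ≥0∞) (α : ℝ) (n : ℕ) :
    Ch d α (n + 1) →ₗ[ZMod 2] Ch d α n :=
  lmap fun σ τ => if τ.1 ⊆ σ.1 then 1 else 0

def cycles [Fintype U] (d : U → U → ℝ≥0∞) (α : ℝ) :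
    (n : ℕ) → Submodule (ZMod 2) (Ch d α n)
  | 0 => ⊤
  | n + 1 => LinearMap.ker (bdry d α n)

/-- Homology of the augmented chain complex at position `n`
(i.e. reduced homology in degree `n - 1`). -/
abbrev homologyAt [Fintype U] (d : U → U → ℝ≥0∞) (α : ℝ) (n : ℕ) :=
  cycles d α n ⧸ Submodule.comap (cycles d α n).subtype (LinearMap.range (bdry d α n))

/-- Reduced simplicial ℤ/2 homology `H_i`, `i ≥ 0`, of the Vietoris–Rips complex. -/
abbrev Hred [Fintype U] (d : U → U → ℝ≥0∞) (α : ℝ) (i : ℕ) := homologyAt d α (i + 1)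

/-- `σ` is a simplex of the Vietoris–Rips complex at threshold `α`. -/
def IsVR [Fintype U] (d : U → U → ℝ≥0∞) (α : ℝ) (σ : Finset U) : Prop :=
  σ.Nonempty ∧ ∀ x ∈ σ, ∀ y ∈ σ, x ≠ y → d x y ≤ ENNReal.ofReal α

end RTD
namespace RTD

/-- Vertices of the graph Ĝ^w: the vertices `A_i` (`.inl (.inl i)`), their copies `A'_i`
(`.inl (.inr i)`), and the two extra vertices `O` (`.inr false`) and `O'` (`.inr true`). -/
abbrev VH2 (N : ℕ) := (Fin N ⊕ Fin N) ⊕ Bool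

/-- The edge weights of the weighted graph Ĝ^w (values on the diagonal are irrelevant). -/
def dhat2 {N : ℕ} (w : Fin N → Fin N → ℝ≥0∞) : VH2 N → VH2 N → ℝ≥0∞
  | Sum.inl (Sum.inl i), Sum.inl (Sum.inl j) => w i j
  | Sum.inl (Sum.inl i), Sum.inl (Sum.inr j) =>
      if i < j then w i j else if i = j then 0 else ⊤
  | Sum.inl (Sum.inr i), Sum.inl (Sum.inl j) =>
      if j < i then w j i else if j = i then 0 else ⊤
  | Sum.inl (Sum.inr _), Sum.inl (Sum.inr _) => 0
  | Sum.inl (Sum.inl _), Sum.inr b => if b then ⊤ else 0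
  | Sum.inr b, Sum.inl (Sum.inl _) => if b then ⊤ else 0
  | Sum.inl (Sum.inr _), Sum.inr b => if b then 0 else ⊤
  | Sum.inr b, Sum.inl (Sum.inr _) => if b then 0 else ⊤
  | Sum.inr a, Sum.inr b => if a = b then 0 else ⊤

/-- The set of unprimed vertices `A_i`, `i ∈ s`, of Ĝ^w. -/
def unp2 {N : ℕ} (s : Finset (Fin N)) : Finset (VH2 N) :=
  s.image fun i => Sum.inl (Sum.inl i)

/-- The set of primed vertices `A'_i`, `i ∈ s`, of Ĝ^w. -/
def prm2 {N : ℕ} (s : Finset (Fin N)) : Finset (VH2 N) :=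
  s.image fun i => Sum.inl (Sum.inr i)

/-- The extra vertex `O` of Ĝ^w. -/
def vO2 {N : ℕ} : VH2 N := Sum.inr false

/-- The extra vertex `O'` of Ĝ^w. -/
def vO2' {N : ℕ} : VH2 N := Sum.inr true

/-- The indices `i` with `A_i ∈ τ`. -/
def uIdx2 {N : ℕ} (τ : Finset (VH2 N)) : Finset (Fin N) :=
  Finset.univ.filter fun i => Sum.inl (Sum.inl i) ∈ τ

/-- The indices `i` with `A'_i ∈ τ`. -/
def pIdx2 {N : ℕ} (τ : Finset (VH2 N)) : Finset (Fin N) :=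
  Finset.univ.filter fun i => Sum.inl (Sum.inr i) ∈ τ

end RTD
namespace RTD

/-- The coefficient of the simplex `τ` of Ĝ^w in
`φ(A_{i_1}…A_{i_n}[-1]) = O A_{i_1}…A_{i_n} + O' A'_{i_1}…A'_{i_n}
 + Σ_{k=1}^{n} A_{i_1}…A_{i_k} A'_{i_k}…A'_{i_n}`,
where `σ = {i_1 < … < i_n}`; for `σ = ∅` this gives `φ(1[-1]) = {O} + {O'}`. -/
def phiCoeff {N : ℕ} (σ : Finset (Fin N)) (τ : Finset (VH2 N)) : ZMod 2 :=
  (if τ = insert vO2 (unp2 σ) then 1 else 0) +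
  (if τ = insert vO2' (prm2 σ) then 1 else 0) +
  ∑ m ∈ σ,
    (if τ = unp2 (σ.filter fun a => a ≤ m) ∪ prm2 (σ.filter fun a => m ≤ a) then 1 else 0)

/-- The map `φ : R_α(G^w)[-1] → R_α(Ĝ^w)`, written with position `n + 1` of the
suspension identified with position `n` of the augmented complex of `R_α(G^w)`. -/
def phi {N : ℕ} (w : Fin N → Fin N → ℝ≥0∞) (α : ℝ) (n : ℕ) :
    Ch w α n →ₗ[ZMod 2] Ch (dhat2 w) α (n + 1) :=
  lmap fun σ τ => phiCoeff σ.1 τ.1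

/-- The map `φ̃ : R_α(Ĝ^w) → R_α(G^w)[-1]` sending `O A_{i_1}…A_{i_n} ↦ A_{i_1}…A_{i_n}[-1]`,
`{O} ↦ 1[-1]` and every other basis element to `0`, written with position `n + 1` of the
suspension identified with position `n` of the augmented complex of `R_α(G^w)`. -/
def phitilde {N : ℕ} (w : Fin N → Fin N → ℝ≥0∞) (α : ℝ) (n : ℕ) :
    Ch (dhat2 w) α (n + 1) →ₗ[ZMod 2] Ch w α n :=
  lmap fun ρ τ => if ρ.1 = insert vO2 (unp2 τ.1) then 1 else 0

/-- The coefficient of `ρ` in `h(τ)`: for `τ = A_{i_1}…A_{i_k}A'_{i_{k+1}}…A'_{i_n}`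
(including the purely primed case `k = 0` and the augmentation generator `τ = ∅`),
`h(τ) = Σ_{l=1}^{k} A_{i_1}…A_{i_l}A'_{i_l}…A'_{i_n} + O'A'_{i_1}…A'_{i_n}`,
and `h = 0` on every other basis element. -/
def hCoeff {N : ℕ} (τ ρ : Finset (VH2 N)) : ZMod 2 :=
  if τ = unp2 (uIdx2 τ) ∪ prm2 (pIdx2 τ) ∧ (∀ a ∈ uIdx2 τ, ∀ b ∈ pIdx2 τ, a < b) then
    (if ρ = insert vO2' (prm2 (uIdx2 τ ∪ pIdx2 τ)) then 1 else 0) +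
    ∑ l ∈ uIdx2 τ,
      (if ρ = unp2 ((uIdx2 τ ∪ pIdx2 τ).filter fun a => a ≤ l) ∪
            prm2 ((uIdx2 τ ∪ pIdx2 τ).filter fun a => l ≤ a) then 1 else 0)
  else 0

/-- The degree `+1` map `h` on the augmented chain complex of `R_α(Ĝ^w)`. -/
def hmap {N : ℕ} (w : Fin N → Fin N → ℝ≥0∞) (α : ℝ) (n : ℕ) :
    Ch (dhat2 w) α n →ₗ[ZMod 2] Ch (dhat2 w) α (n + 1) :=
  lmap fun τ ρ => hCoeff τ.1 ρ.1

end RTD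

namespace RTD


section Aux

variable {N : ℕ}

lemma mem_unp2 {s : Finset (Fin N)} {i : Fin N} :
    (Sum.inl (Sum.inl i) : VH2 N) ∈ unp2 s ↔ i ∈ s := by
  simp [unp2]

lemma vO2_not_mem_unp2 {s : Finset (Fin N)} : (vO2 : VH2 N) ∉ unp2 s := by
  simp [unp2, vO2]

lemma unp2_injective : Function.Injective (unp2 (N := N)) := by
  intro s t h
  ext i
  rw [← mem_unp2, h, mem_unp2]

lemma card_unp2 (s : Finset (Fin N)) : (unp2 s).card = s.card :=
  Finset.card_image_of_injective _ (fun a b h => by simpa using h)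

lemma card_insert_vO2_unp2 (s : Finset (Fin N)) :
    (insert vO2 (unp2 s)).card = s.card + 1 := by
  rw [Finset.card_insert_of_notMem vO2_not_mem_unp2, card_unp2]

lemma insert_vO2_unp2_inj {s t : Finset (Fin N)} :
    insert vO2 (unp2 s) = insert vO2 (unp2 t) ↔ s = t := by
  constructor
  · intro h
    apply unp2_injective
    have h2 := congrArg (fun u : Finset (VH2 N) => u.erase vO2) h
    simpa [Finset.erase_insert, vO2_not_mem_unp2] using h2
  · rintro rfl; rfl

lemma insert_vO2_unp2_subset {s t : Finset (Fin N)} :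
    insert vO2 (unp2 s) ⊆ insert vO2 (unp2 t) ↔ s ⊆ t := by
  constructor
  · intro h i hi
    have := h (Finset.mem_insert_of_mem (mem_unp2.2 hi))
    rcases Finset.mem_insert.1 this with h' | h'
    · exact absurd h' (by simp [vO2])
    · exact mem_unp2.1 h'
  · intro h
    exact Finset.insert_subset_insert _ (Finset.image_subset_image h)

/-- `insert vO2 (unp2 σ)` is a Vietoris–Rips simplex of `Ĝ^w` when `σ` is one of `G^w`. -/
lemma vr_insert_O {w : Fin N → Fin N → ℝ≥0∞} {α : ℝ} {σ : Finset (Fin N)}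
    (h : ∀ x ∈ σ, ∀ y ∈ σ, x ≠ y → w x y ≤ ENNReal.ofReal α) :
    ∀ x ∈ insert vO2 (unp2 σ), ∀ y ∈ insert vO2 (unp2 σ), x ≠ y →
      dhat2 w x y ≤ ENNReal.ofReal α := by
  intro x hx y hy hxy
  simp only [Finset.mem_insert, unp2, Finset.mem_image] at hx hy
  rcases hx with rfl | ⟨i, hi, rfl⟩ <;> rcases hy with rfl | ⟨j, hj, rfl⟩
  · exact absurd rfl hxy
  · simp [dhat2, vO2]
  · simp [dhat2, vO2]
  · have hij : i ≠ j := by rintro rfl; exact hxy rfl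
    simpa [dhat2] using h i hi j hj hij

/-- Any VR simplex of `Ĝ^w` containing `O` consists of `O` and unprimed vertices. -/
lemma eq_insert_of_O_mem {w : Fin N → Fin N → ℝ≥0∞} {α : ℝ} {ρ : Finset (VH2 N)}
    (hρ : ∀ x ∈ ρ, ∀ y ∈ ρ, x ≠ y → dhat2 w x y ≤ ENNReal.ofReal α)
    (hO : vO2 ∈ ρ) : ρ = insert vO2 (unp2 (uIdx2 ρ)) := by
  ext x
  simp only [Finset.mem_insert, unp2, uIdx2, Finset.mem_image, Finset.mem_filter,
    Finset.mem_univ, true_and]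
  constructor
  · intro hx
    match x with
    | Sum.inr false => exact Or.inl rfl
    | Sum.inl (Sum.inl i) => exact Or.inr ⟨i, hx, rfl⟩
    | Sum.inl (Sum.inr i) =>
        exfalso
        have ht := hρ _ hO _ hx (by simp [vO2])
        simp only [dhat2, vO2] at ht
        simp [top_le_iff, ENNReal.ofReal_ne_top] at ht
    | Sum.inr true =>
        exfalso
        have ht := hρ _ hO _ hx (by simp [vO2])
        simp only [dhat2, vO2] at ht
        simp [top_le_iff, ENNReal.ofReal_ne_top] at ht
  · rintro (rfl | ⟨i, hi, rfl⟩)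
    · exact hO
    · exact hi

lemma vr_uIdx2 {w : Fin N → Fin N → ℝ≥0∞} {α : ℝ} {ρ : Finset (VH2 N)}
    (hρ : ∀ x ∈ ρ, ∀ y ∈ ρ, x ≠ y → dhat2 w x y ≤ ENNReal.ofReal α) :
    ∀ i ∈ uIdx2 ρ, ∀ j ∈ uIdx2 ρ, i ≠ j → w i j ≤ ENNReal.ofReal α := by
  intro i hi j hj hij
  simp only [uIdx2, Finset.mem_filter] at hi hj
  have := hρ _ hi.2 _ hj.2 (by simpa using hij)
  simpa [dhat2] using this

lemma mul_ite_ite (P Q : Prop) [Decidable P] [Decidable Q] :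
    (if P then (1 : ZMod 2) else 0) * (if Q then 1 else 0) = if P ∧ Q then 1 else 0 := by
  by_cases hP : P <;> by_cases hQ : Q <;> simp [hP, hQ]

lemma sum_ite_eq_pred {ι : Type*} [Fintype ι] (P : ι → Prop) [DecidablePred P]
    (i₀ : ι) [DecidableEq ι] :
    (∑ i, if P i ∧ i = i₀ then (1 : ZMod 2) else 0) = if P i₀ then 1 else 0 := by
  rw [Finset.sum_eq_single i₀]
  · simp
  · intro b _ hb; simp [hb]
  · intro h; exact absurd (Finset.mem_univ _) h

lemma sum_mul_ite {ι : Type*} [Fintype ι] (f : ι → ZMod 2) (i₀ : ι) [DecidableEq ι] :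
    (∑ i, f i * if i = i₀ then 1 else 0) = f i₀ := by
  rw [Finset.sum_eq_single i₀]
  · simp
  · intro b _ hb; simp [hb]
  · intro h; exact absurd (Finset.mem_univ _) h

lemma lmap_comp {ι κ μ : Type*} [Fintype ι] [Fintype κ]
    (M : κ → μ → ZMod 2) (M' : ι → κ → ZMod 2) :
    lmap M ∘ₗ lmap M' = lmap (fun i m => ∑ k, M' i k * M k m) := by
  apply LinearMap.ext
  intro f
  funext m
  simp only [lmap, LinearMap.coe_comp, Function.comp_apply, LinearMap.coe_mk, AddHom.coe_mk]
  simp only [Finset.mul_sum]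
  rw [Finset.sum_comm]
  refine Finset.sum_congr rfl fun i _ => ?_
  rw [Finset.sum_mul]
  exact Finset.sum_congr rfl fun k _ => by ring

lemma lmap_id {ι : Type*} [Fintype ι] [DecidableEq ι] :
    lmap (fun i j : ι => if i = j then 1 else 0) = LinearMap.id := by
  apply LinearMap.ext
  intro f
  funext k
  simp only [lmap, LinearMap.coe_mk, AddHom.coe_mk, LinearMap.id_coe, id_eq]
  rw [Finset.sum_eq_single k] <;> simp +contextual

lemma swap_sum {ι κ : Type*} (s : Finset ι) (t : Finset κ)
    (A : ι → ZMod 2) (B : κ → ι → ZMod 2) (f : κ → ZMod 2) :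
    (∑ σ ∈ s, A σ * ∑ ρ ∈ t, B ρ σ * f ρ) = ∑ ρ ∈ t, (∑ σ ∈ s, B ρ σ * A σ) * f ρ := by
  simp only [Finset.mul_sum]
  rw [Finset.sum_comm]
  refine Finset.sum_congr rfl fun ρ _ => ?_
  rw [Finset.sum_mul]
  exact Finset.sum_congr rfl fun σ _ => by ring

lemma lmap_comp_congr {ι κ κ' μ : Type*} (iι₁ iι₂ : Fintype ι) (iκ : Fintype κ)
    (iκ' : Fintype κ') (M : κ → μ → ZMod 2) (M' : ι → κ → ZMod 2)
    (P : κ' → μ → ZMod 2) (P' : ι → κ' → ZMod 2)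
    (h : ∀ i m, (@Finset.univ κ iκ).sum (fun k => M' i k * M k m)
        = (@Finset.univ κ' iκ').sum (fun k => P' i k * P k m)) :
    LinearMap.comp (@lmap κ μ iκ M) (@lmap ι κ iι₁ M') =
      LinearMap.comp (@lmap κ' μ iκ' P) (@lmap ι κ' iι₂ P') := by
  obtain rfl : iι₁ = iι₂ := Subsingleton.elim _ _
  letI := iι₁; letI := iκ; letI := iκ'
  rw [lmap_comp, lmap_comp]
  congr 1
  funext i m
  exact h i m

lemma lmap_comp_eq_id {ι κ : Type*} (iι : Fintype ι) (iκ : Fintype κ)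
    (M : κ → ι → ZMod 2) (M' : ι → κ → ZMod 2)
    (h : ∀ i j, (@Finset.univ κ iκ).sum (fun k => M' i k * M k j)
        = if i = j then 1 else 0) :
    LinearMap.comp (@lmap κ ι iκ M) (@lmap ι κ iι M') = LinearMap.id := by
  letI := iι; letI := iκ
  rw [lmap_comp]
  have he : (fun i j => ∑ k, M' i k * M k j)
      = (fun i j : ι => if i = j then (1 : ZMod 2) else 0) :=
    funext fun i => funext fun j => h i j
  rw [he, lmap_id]

end Aux

set_option maxHeartbeats 1000000 in
/-- **`φ̃` is a chain map and `φ̃ ∘ φ = Id`.**  The map `φ̃ : R_α(Ĝ^w) → R_α(G^w)[-1]`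
commutes with the differentials of the augmented ℤ/2 chain complexes, and
`φ̃ ∘ φ` is the identity of the suspended augmented chain complex `R_α(G^w)[-1]`
(position `n + 1` of the suspension being identified with position `n` of the augmented
complex of `R_α(G^w)`; at the bottom position of the suspension both sides vanish). -/
theorem phitilde_chainmap_and_retraction
    (N : ℕ) (w : Fin N → Fin N → ℝ≥0∞) (hw : ∀ i j, w i j = w j i)
    (α : ℝ) (hα : 0 ≤ α) :
    -- φ̃ is a chain map
    (∀ n : ℕ,
      bdry w α n ∘ₗ phitilde w α (n + 1) = phitilde w α n ∘ₗ bdry (dhat2 w) α (n + 1)) ∧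
    -- φ̃ ∘ φ = Id
    (∀ n : ℕ, phitilde w α n ∘ₗ phi w α n = LinearMap.id) := by
  constructor
  · -- φ̃ is a chain map
    intro n
    unfold bdry phitilde
    refine lmap_comp_congr _ _ _ _ _ _ _ _ ?_
    intro ρ τ
    have hτcard : (insert vO2 (unp2 τ.1)).card = n + 1 := by
      rw [card_insert_vO2_unp2, τ.2.1]
    by_cases hO : vO2 ∈ ρ.1
    · have hρeq := eq_insert_of_O_mem ρ.2.2 hO
      have hScard : (uIdx2 ρ.1).card = n + 1 := by
        have hc := ρ.2.1
        rw [hρeq, card_insert_vO2_unp2] at hc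
        omega
      refine Eq.trans (Finset.sum_eq_single
          (⟨uIdx2 ρ.1, hScard, vr_uIdx2 ρ.2.2⟩ : Simp w α (n + 1)) ?_ ?_)
        (Eq.trans ?_ (Finset.sum_eq_single
          (⟨insert vO2 (unp2 τ.1), hτcard, vr_insert_O τ.2.2⟩ :
            Simp (dhat2 w) α (n + 1)) ?_ ?_).symm)
      · intro b _ hb
        rw [if_neg, zero_mul]
        intro h
        have h2 : insert vO2 (unp2 (uIdx2 ρ.1)) = insert vO2 (unp2 b.1) :=
          hρeq.symm.trans h
        exact hb (Subtype.ext (insert_vO2_unp2_inj.1 h2).symm)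
      · intro hmem
        exact (hmem (by simp)).elim
      · rw [if_pos hρeq, one_mul, if_pos rfl, mul_one]
        by_cases hsub : τ.1 ⊆ uIdx2 ρ.1
        · rw [if_pos hsub, if_pos (by rw [hρeq]; exact insert_vO2_unp2_subset.2 hsub)]
        · rw [if_neg hsub, if_neg
            (fun h => hsub (insert_vO2_unp2_subset.1 (by rw [← hρeq]; exact h)))]
      · intro b _ hb
        rw [if_neg (fun h => hb (Subtype.ext h)), mul_zero]
      · intro hmem
        exact (hmem (by simp)).elim
    · refine Eq.trans (Finset.sum_eq_zero ?_) (Finset.sum_eq_zero ?_).symm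
      · intro σ _
        rw [if_neg, zero_mul]
        intro h1
        exact hO (by rw [h1]; exact Finset.mem_insert_self _ _)
      · intro π _
        by_cases hπ : π.1 = insert vO2 (unp2 τ.1)
        · rw [if_neg, zero_mul]
          intro h
          exact hO (h (by rw [hπ]; exact Finset.mem_insert_self _ _))
        · rw [if_neg hπ, mul_zero]
  · -- φ̃ ∘ φ = Id
    intro n
    unfold phitilde phi
    refine lmap_comp_eq_id _ _ _ _ ?_
    intro σ τ
    have hτcard : (insert vO2 (unp2 τ.1)).card = n + 1 := by
      rw [card_insert_vO2_unp2, τ.2.1]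
    refine Eq.trans (Finset.sum_eq_single
        (⟨insert vO2 (unp2 τ.1), hτcard, vr_insert_O τ.2.2⟩ :
          Simp (dhat2 w) α (n + 1)) ?_ ?_) ?_
    · intro b _ hb
      rw [if_neg (fun h => hb (Subtype.ext h)), mul_zero]
    · intro hmem
      exact (hmem (by simp)).elim
    · rw [if_pos rfl, mul_one]
      show phiCoeff σ.1 (insert vO2 (unp2 τ.1)) = _
      unfold phiCoeff
      have h2 : insert vO2 (unp2 τ.1) ≠ insert vO2' (prm2 σ.1) := by
        intro h
        have hm : (vO2 : VH2 N) ∈ insert vO2' (prm2 σ.1) := h ▸ Finset.mem_insert_self _ _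
        simp [vO2, vO2', prm2] at hm
      have h3 : ∀ m ∈ σ.1, (if insert vO2 (unp2 τ.1) =
          unp2 (σ.1.filter fun a => a ≤ m) ∪ prm2 (σ.1.filter fun a => m ≤ a)
          then (1 : ZMod 2) else 0) = 0 := by
        intro m _
        rw [if_neg]
        intro h
        have hm : (vO2 : VH2 N) ∈
            unp2 (σ.1.filter fun a => a ≤ m) ∪ prm2 (σ.1.filter fun a => m ≤ a) :=
          h ▸ Finset.mem_insert_self _ _
        simp [vO2, unp2, prm2] at hm
      rw [if_neg h2, add_zero, Finset.sum_eq_zero h3, add_zero]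
      by_cases h : σ = τ
      · subst h
        rw [if_pos rfl, if_pos rfl]
      · rw [if_neg, if_neg h]
        intro heq
        exact h (Subtype.ext (insert_vO2_unp2_inj.1 heq).symm)

end RTD
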